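/- Let a >= 0 and u be a C^2 function on an open subset Omega of (0,infinity) x R^k solving L_a u = -1, i.e. div(r^a grad u) = -r^a. Let Z(x) = x be the radial vector field on R^{k+1}. Then pointwise in Omega: div( r^a*(|grad u|^2/2)*Z - r^a*(Zu)*grad u - r^a*u*Z ) = (a-1+k)*r^a*(|grad u|^2/2) - (a+1+k)*r^a*u. -/

import Mathlib

open Set Finset

/-- Partial derivative of `u` in the `i`-th coordinate direction. -/
noncomputable def pd {n : ℕ} (i : Fin n) (u : (Fin n → ℝ) → ℝ) (x : Fin n → ℝ) : ℝ :=
  fderiv ℝ u x (Pi.single i 1)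

section helpers
variable {n : ℕ}

lemma pd_sub (i : Fin n) {f g : (Fin n → ℝ) → ℝ} {x} (hf : DifferentiableAt ℝ f x)
    (hg : DifferentiableAt ℝ g x) :
    pd i (fun z => f z - g z) x = pd i f x - pd i g x := by
  simp [pd, fderiv_fun_sub hf hg]

lemma pd_mul (i : Fin n) {f g : (Fin n → ℝ) → ℝ} {x} (hf : DifferentiableAt ℝ f x)
    (hg : DifferentiableAt ℝ g x) :
    pd i (fun z => f z * g z) x = pd i f x * g x + f x * pd i g x := by
  simp [pd, fderiv_fun_mul hf hg]; ring

lemma pd_div_const (i : Fin n) {f : (Fin n → ℝ) → ℝ} {x} (hf : DifferentiableAt ℝ f x) (c : ℝ) :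
    pd i (fun z => f z / c) x = pd i f x / c := by
  simp only [div_eq_mul_inv, pd, fderiv_mul_const hf]
  simp [mul_comm]

lemma pd_sum (i : Fin n) {m : ℕ} {f : Fin m → (Fin n → ℝ) → ℝ} {x}
    (hf : ∀ j, DifferentiableAt ℝ (f j) x) :
    pd i (fun z => ∑ j, f j z) x = ∑ j, pd i (f j) x := by
  simp [pd, fderiv_fun_sum (fun j _ => hf j)]

lemma hasFDerivAt_coord (j : Fin n) (x : Fin n → ℝ) :
    HasFDerivAt (fun z : Fin n → ℝ => z j)
      (ContinuousLinearMap.proj (R := ℝ) (φ := fun _ : Fin n => ℝ) j) x :=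
  (ContinuousLinearMap.proj (R := ℝ) (φ := fun _ : Fin n => ℝ) j).hasFDerivAt

lemma pd_coord (i j : Fin n) (x : Fin n → ℝ) :
    pd i (fun z : Fin n → ℝ => z j) x = if j = i then 1 else 0 := by
  rw [pd, (hasFDerivAt_coord j x).fderiv]
  simp [Pi.single_apply]

lemma hasFDerivAt_W (a : ℝ) (p : Fin n) {x : Fin n → ℝ} (hx : x p ≠ 0) :
    HasFDerivAt (fun z : Fin n → ℝ => z p ^ a)
      ((a * x p ^ (a - 1)) • ContinuousLinearMap.proj (R := ℝ) (φ := fun _ : Fin n => ℝ) p) x :=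
  by have h := (Real.hasDerivAt_rpow_const (p := a) (Or.inl hx)).comp_hasFDerivAt x (hasFDerivAt_coord p x); exact h

lemma pd_W (a : ℝ) (p i : Fin n) {x : Fin n → ℝ} (hx : x p ≠ 0) :
    pd i (fun z : Fin n → ℝ => z p ^ a) x
      = if p = i then a * x p ^ (a - 1) else 0 := by
  rw [pd, (hasFDerivAt_W a p hx).fderiv]
  simp [Pi.single_apply]

lemma pd_pd_eq {x : Fin n → ℝ} {u : (Fin n → ℝ) → ℝ} (hu : ContDiffAt ℝ 2 u x) (i j : Fin n) :
    pd i (pd j u) x = fderiv ℝ (fderiv ℝ u) x (Pi.single i 1) (Pi.single j 1) := by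
  have hf' : DifferentiableAt ℝ (fderiv ℝ u) x :=
    (hu.fderiv_right (m := 1) (by norm_num)).differentiableAt one_ne_zero
  have h : pd j u = fun y => (fderiv ℝ u y) (Pi.single j 1) := rfl
  rw [pd, h, fderiv_clm_apply hf' (differentiableAt_const _)]
  simp

lemma pd_pd_symm {x : Fin n → ℝ} {u : (Fin n → ℝ) → ℝ} (hu : ContDiffAt ℝ 2 u x) (i j : Fin n) :
    pd i (pd j u) x = pd j (pd i u) x := by
  rw [pd_pd_eq hu, pd_pd_eq hu]
  exact hu.isSymmSndFDerivAt (by simp) _ _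

lemma diff_pd {x : Fin n → ℝ} {u : (Fin n → ℝ) → ℝ} (hu : ContDiffAt ℝ 2 u x) (j : Fin n) :
    DifferentiableAt ℝ (pd j u) x := by
  have hf' : DifferentiableAt ℝ (fderiv ℝ u) x :=
    (hu.fderiv_right (m := 1) (by norm_num)).differentiableAt one_ne_zero
  exact hf'.clm_apply (differentiableAt_const _)

end helpers

/-- The generator of dilations, `Z f (x) = ⟨x, ∇f(x)⟩`. -/
noncomputable def dil {n : ℕ} (f : (Fin n → ℝ) → ℝ) (x : Fin n → ℝ) : ℝ :=
  ∑ i, x i * pd i f x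

/-- The Weinstein operator `L_a u = ∂_rr u + (a/r) ∂_r u + Δ_y u`. -/
noncomputable def weinstein {k : ℕ} (a : ℝ) (u : (Fin (k + 1) → ℝ) → ℝ)
    (x : Fin (k + 1) → ℝ) : ℝ :=
  (∑ i, pd i (pd i u) x) + (a / x 0) * pd 0 u x

theorem stmt_16 (a : ℝ) (ha : 0 ≤ a) (k : ℕ)
    (Ω : Set (Fin (k + 1) → ℝ)) (hΩopen : IsOpen Ω)
    (hΩ : Ω ⊆ {x : Fin (k + 1) → ℝ | 0 < x 0})
    (u : (Fin (k + 1) → ℝ) → ℝ) (hu : ContDiffOn ℝ 2 u Ω)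
    (heq : ∀ x ∈ Ω, weinstein a u x = -1) :
    ∀ x ∈ Ω,
      (∑ i, pd i (fun z =>
          (z 0) ^ a * ((∑ j, (pd j u z) ^ 2) / 2) * z i
            - (z 0) ^ a * dil u z * pd i u z
            - (z 0) ^ a * u z * z i) x) =
        (a - 1 + k) * (x 0) ^ a * ((∑ j, (pd j u x) ^ 2) / 2)
          - (a + 1 + k) * (x 0) ^ a * u x := by
  intro x hx
  have hx0 : 0 < x 0 := hΩ hx
  have hcd : ContDiffAt ℝ 2 u x := hu.contDiffAt (hΩopen.mem_nhds hx)
  have hud : DifferentiableAt ℝ u x := hcd.differentiableAt (by norm_num)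
  have hpd : ∀ j : Fin (k+1), DifferentiableAt ℝ (pd j u) x := diff_pd hcd
  have hWd : DifferentiableAt ℝ (fun z : Fin (k+1) → ℝ => z 0 ^ a) x :=
    (hasFDerivAt_W a 0 hx0.ne').differentiableAt
  have hco : ∀ j : Fin (k+1), DifferentiableAt ℝ (fun z : Fin (k+1) → ℝ => z j) x :=
    fun j => (hasFDerivAt_coord j x).differentiableAt
  have hE : DifferentiableAt ℝ (fun z => ∑ j, pd j u z ^ 2) x :=
    DifferentiableAt.fun_sum fun j _ => (hpd j).fun_pow 2
  have hE2 : DifferentiableAt ℝ (fun z => (∑ j, pd j u z ^ 2) / 2) x := by simpa [div_eq_mul_inv] using hE.mul_const (2:ℝ)⁻¹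
  have hdil : DifferentiableAt ℝ (dil u) x := by
    have h : dil u = fun z => ∑ j, z j * pd j u z := rfl
    rw [h]
    exact DifferentiableAt.fun_sum fun j _ => (hco j).fun_mul (hpd j)
  have pdE2 : ∀ i, pd i (fun z => (∑ j, pd j u z ^ 2) / 2) x
      = ∑ j, pd j u x * pd i (pd j u) x := by
    intro i
    rw [pd_div_const i hE 2, pd_sum i (fun j => (hpd j).fun_pow 2)]
    have h : ∀ j : Fin (k+1), pd i (fun z => pd j u z ^ 2) x
        = 2 * (pd j u x * pd i (pd j u) x) := by
      intro j
      have h2 : (fun z => pd j u z ^ 2) = fun z => pd j u z * pd j u z := by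
        funext z; ring
      rw [h2, pd_mul i (hpd j) (hpd j)]; ring
    rw [Finset.sum_congr rfl fun j _ => h j, ← Finset.mul_sum]
    ring
  have pddil : ∀ i, pd i (dil u) x = pd i u x + ∑ j, x j * pd i (pd j u) x := by
    intro i
    have hd : dil u = fun z => ∑ j, z j * pd j u z := rfl
    rw [hd, pd_sum i (fun j => (hco j).fun_mul (hpd j))]
    have h : ∀ j : Fin (k+1), pd i (fun z => z j * pd j u z) x
        = (if j = i then 1 else 0) * pd j u x + x j * pd i (pd j u) x := by
      intro j
      rw [pd_mul i (hco j) (hpd j), pd_coord]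
    rw [Finset.sum_congr rfl fun j _ => h j, Finset.sum_add_distrib]
    congr 1
    simp
  have hWE2 : DifferentiableAt ℝ (fun z => z 0 ^ a * ((∑ j, pd j u z ^ 2) / 2)) x :=
    hWd.mul hE2
  have hWdil : DifferentiableAt ℝ (fun z => z 0 ^ a * dil u z) x := hWd.mul hdil
  have hWu : DifferentiableAt ℝ (fun z => z 0 ^ a * u z) x := hWd.mul hud
  have key : ∀ i : Fin (k+1), pd i (fun z =>
        (z 0) ^ a * ((∑ j, (pd j u z) ^ 2) / 2) * z i
          - (z 0) ^ a * dil u z * pd i u z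
          - (z 0) ^ a * u z * z i) x =
      (if (0:Fin (k+1)) = i then (a * (x 0 ^ a / x 0)) *
          (((∑ j, pd j u x ^ 2) / 2) * x i - dil u x * pd i u x - u x * x i) else 0)
        + x 0 ^ a * ((∑ j, pd j u x * pd i (pd j u) x) * x i)
        + x 0 ^ a * ((∑ j, pd j u x ^ 2) / 2)
        - x 0 ^ a * ((pd i u x + ∑ j, x j * pd i (pd j u) x) * pd i u x)
        - (x 0 ^ a * dil u x) * pd i (pd i u) x
        - x 0 ^ a * (pd i u x * x i)
        - x 0 ^ a * u x := by
    intro i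
    rw [pd_sub i ((hWE2.fun_mul (hco i)).fun_sub (hWdil.fun_mul (hpd i))) (hWu.fun_mul (hco i)),
        pd_sub i (hWE2.fun_mul (hco i)) (hWdil.fun_mul (hpd i)),
        pd_mul i hWE2 (hco i), pd_mul i hWdil (hpd i), pd_mul i hWu (hco i),
        pd_mul i hWd hE2, pd_mul i hWd hdil, pd_mul i hWd hud,
        pd_coord i i, pdE2 i, pddil i, pd_W a 0 i hx0.ne',
        Real.rpow_sub_one hx0.ne']
    rw [if_pos (rfl : i = i)]
    split_ifs <;> ring
  rw [Finset.sum_congr rfl fun i _ => key i]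
  simp only [Finset.sum_sub_distrib, Finset.sum_add_distrib]
  have eA : (∑ i : Fin (k+1), if (0:Fin (k+1)) = i then (a * (x 0 ^ a / x 0)) *
          (((∑ j, pd j u x ^ 2) / 2) * x i - dil u x * pd i u x - u x * x i) else 0)
      = (a * (x 0 ^ a / x 0)) *
          (((∑ j, pd j u x ^ 2) / 2) * x 0 - dil u x * pd 0 u x - u x * x 0) := by
    simp
  have eB : (∑ i : Fin (k+1), x 0 ^ a * ((∑ j, pd j u x * pd i (pd j u) x) * x i))
      = x 0 ^ a * ∑ i : Fin (k+1), (∑ j, pd j u x * pd i (pd j u) x) * x i :=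
    (Finset.mul_sum _ _ _).symm
  have eC : (∑ _i : Fin (k+1), x 0 ^ a * ((∑ j, pd j u x ^ 2) / 2))
      = (k+1 : ℝ) * (x 0 ^ a * ((∑ j, pd j u x ^ 2) / 2)) := by
    rw [Finset.sum_const, Finset.card_univ, Fintype.card_fin, nsmul_eq_mul]
    push_cast; ring
  have eD : (∑ i : Fin (k+1), x 0 ^ a * ((pd i u x + ∑ j, x j * pd i (pd j u) x) * pd i u x))
      = x 0 ^ a * (∑ i, pd i u x ^ 2)
        + x 0 ^ a * ∑ i : Fin (k+1), (∑ j, pd j u x * pd i (pd j u) x) * x i := by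
    rw [← Finset.mul_sum, ← mul_add]
    congr 1
    have h : ∀ i : Fin (k+1), (pd i u x + ∑ j, x j * pd i (pd j u) x) * pd i u x
        = pd i u x ^ 2 + (∑ j, x j * pd i (pd j u) x) * pd i u x := fun i => by ring
    rw [Finset.sum_congr rfl fun i _ => h i, Finset.sum_add_distrib]
    congr 1
    simp only [Finset.sum_mul]
    rw [Finset.sum_comm]
    exact Finset.sum_congr rfl fun i _ => Finset.sum_congr rfl fun j _ => by
      rw [pd_pd_symm hcd j i]; ring
  have eE : (∑ i : Fin (k+1), (x 0 ^ a * dil u x) * pd i (pd i u) x)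
      = (x 0 ^ a * dil u x) * (-1 - (a / x 0) * pd 0 u x) := by
    rw [← Finset.mul_sum]
    congr 1
    have h := heq x hx
    unfold weinstein at h
    linarith
  have eF : (∑ i : Fin (k+1), x 0 ^ a * (pd i u x * x i)) = x 0 ^ a * dil u x := by
    rw [← Finset.mul_sum]
    congr 1
    exact Finset.sum_congr rfl fun i _ => mul_comm _ _
  have eG : (∑ _i : Fin (k+1), x 0 ^ a * u x) = (k+1 : ℝ) * (x 0 ^ a * u x) := by
    rw [Finset.sum_const, Finset.card_univ, Fintype.card_fin, nsmul_eq_mul]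
    push_cast; ring
  rw [eA, eB, eC, eD, eE, eF, eG]
  have hP : (∑ i : Fin (k+1), pd i u x ^ 2) = ∑ j, pd j u x ^ 2 := rfl
  rw [hP]
  field_simp
  ring
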